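/- arXiv:1305.2826 — 8 statements merged into one kernel-verified Lean document; each statement's English description precedes it below -/
import Mathlib

section
/- For all vectors w, t ∈ Q and all indices 1 ≤ i, k ≤ m, the commutator [E_{i,w}, E_{k,t}] acts on M by [E_{i,w}, E_{k,t}](z, x, f) = (z, x + f(x_i)·⟨t,w⟩·x_k − f(x_k)·⟨w,t⟩·x_i, f). In particular, if i = k then [E_{i,w}, E_{k,t}] is the identity automorphism of M. -/
open QuadraticMap
open scoped commutatorElement

/-- The DSER elementary orthogonal transformation `E_{i,w}` on `M = Q ⊕ P ⊕ P*`,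
`P = A^m`:  `E_{i,w}(z,x,f) = (z − f(xᵢ)•w, x + ⟨w,z⟩•xᵢ − f(xᵢ)·q(w)•xᵢ, f)`. -/
noncomputable def Eplus {A Q : Type*} [CommRing A] [AddCommGroup Q] [Module A Q]
    {m : ℕ} (q : QuadraticForm A Q) (i : Fin m) (w : Q) :
    (Q × (Fin m → A) × (Fin m → A)) ≃ₗ[A] (Q × (Fin m → A) × (Fin m → A)) where
  toFun p := (p.1 - p.2.2 i • w,
    p.2.1 + polar ⇑q w p.1 • (Pi.single i 1 : Fin m → A)
      - (p.2.2 i * q w) • (Pi.single i 1 : Fin m → A),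
    p.2.2)
  invFun p := (p.1 + p.2.2 i • w,
    p.2.1 - polar ⇑q w p.1 • (Pi.single i 1 : Fin m → A)
      - (p.2.2 i * q w) • (Pi.single i 1 : Fin m → A),
    p.2.2)
  map_add' p p' := by
    obtain ⟨z, x, f⟩ := p
    obtain ⟨z', x', f'⟩ := p'
    refine Prod.ext ?_ (Prod.ext ?_ rfl)
    · show z + z' - (f i + f' i) • w = (z - f i • w) + (z' - f' i • w)
      module
    · show x + x' + polar ⇑q w (z + z') • (Pi.single i 1 : Fin m → A)
        - ((f i + f' i) * q w) • (Pi.single i 1 : Fin m → A) = _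
      rw [polar_add_right]
      show _ = (x + polar ⇑q w z • (Pi.single i 1 : Fin m → A) - (f i * q w) • (Pi.single i 1 : Fin m → A))
        + (x' + polar ⇑q w z' • (Pi.single i 1 : Fin m → A) - (f' i * q w) • (Pi.single i 1 : Fin m → A))
      module
  map_smul' a p := by
    obtain ⟨z, x, f⟩ := p
    refine Prod.ext ?_ (Prod.ext ?_ rfl)
    · show a • z - (a • f) i • w = a • (z - f i • w)
      simp only [Pi.smul_apply, smul_eq_mul]
      module
    · show a • x + polar ⇑q w (a • z) • (Pi.single i 1 : Fin m → A)
        - ((a • f) i * q w) • (Pi.single i 1 : Fin m → A)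
        = a • (x + polar ⇑q w z • (Pi.single i 1 : Fin m → A) - (f i * q w) • (Pi.single i 1 : Fin m → A))
      rw [polar_smul_right]
      simp only [Pi.smul_apply, smul_eq_mul]
      module
  left_inv p := by
    obtain ⟨z, x, f⟩ := p
    refine Prod.ext ?_ (Prod.ext ?_ rfl)
    · show z - f i • w + f i • w = z
      module
    · show x + polar ⇑q w z • (Pi.single i 1 : Fin m → A) - (f i * q w) • (Pi.single i 1 : Fin m → A)
        - polar ⇑q w (z - f i • w) • (Pi.single i 1 : Fin m → A)
        - (f i * q w) • (Pi.single i 1 : Fin m → A) = x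
      rw [polar_sub_right, polar_smul_right, polar_self]
      simp only [smul_eq_mul]
      module
  right_inv p := by
    obtain ⟨z, x, f⟩ := p
    refine Prod.ext ?_ (Prod.ext ?_ rfl)
    · show z + f i • w - f i • w = z
      module
    · show x - polar ⇑q w z • (Pi.single i 1 : Fin m → A) - (f i * q w) • (Pi.single i 1 : Fin m → A)
        + polar ⇑q w (z + f i • w) • (Pi.single i 1 : Fin m → A)
        - (f i * q w) • (Pi.single i 1 : Fin m → A) = x
      rw [polar_add_right, polar_smul_right, polar_self]
      simp only [smul_eq_mul]
      module

/-- The DSER elementary orthogonal transformation `E*_{i,w}` on `M = Q ⊕ P ⊕ P*`: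
`E*_{i,w}(z,x,f) = (z − fᵢ(x)•w, x, f + ⟨w,z⟩•fᵢ − fᵢ(x)·q(w)•fᵢ)`. -/
noncomputable def Estar {A Q : Type*} [CommRing A] [AddCommGroup Q] [Module A Q]
    {m : ℕ} (q : QuadraticForm A Q) (i : Fin m) (w : Q) :
    (Q × (Fin m → A) × (Fin m → A)) ≃ₗ[A] (Q × (Fin m → A) × (Fin m → A)) where
  toFun p := (p.1 - p.2.1 i • w,
    p.2.1,
    p.2.2 + polar ⇑q w p.1 • (Pi.single i 1 : Fin m → A)
      - (p.2.1 i * q w) • (Pi.single i 1 : Fin m → A))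
  invFun p := (p.1 + p.2.1 i • w,
    p.2.1,
    p.2.2 - polar ⇑q w p.1 • (Pi.single i 1 : Fin m → A)
      - (p.2.1 i * q w) • (Pi.single i 1 : Fin m → A))
  map_add' p p' := by
    obtain ⟨z, x, f⟩ := p
    obtain ⟨z', x', f'⟩ := p'
    refine Prod.ext ?_ (Prod.ext rfl ?_)
    · show z + z' - (x i + x' i) • w = (z - x i • w) + (z' - x' i • w)
      module
    · show f + f' + polar ⇑q w (z + z') • (Pi.single i 1 : Fin m → A)
        - ((x i + x' i) * q w) • (Pi.single i 1 : Fin m → A) = _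
      rw [polar_add_right]
      show _ = (f + polar ⇑q w z • (Pi.single i 1 : Fin m → A)
          - (x i * q w) • (Pi.single i 1 : Fin m → A))
        + (f' + polar ⇑q w z' • (Pi.single i 1 : Fin m → A)
          - (x' i * q w) • (Pi.single i 1 : Fin m → A))
      module
  map_smul' a p := by
    obtain ⟨z, x, f⟩ := p
    refine Prod.ext ?_ (Prod.ext rfl ?_)
    · show a • z - (a • x) i • w = a • (z - x i • w)
      simp only [Pi.smul_apply, smul_eq_mul]
      module
    · show a • f + polar ⇑q w (a • z) • (Pi.single i 1 : Fin m → A)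
        - ((a • x) i * q w) • (Pi.single i 1 : Fin m → A)
        = a • (f + polar ⇑q w z • (Pi.single i 1 : Fin m → A)
          - (x i * q w) • (Pi.single i 1 : Fin m → A))
      rw [polar_smul_right]
      simp only [Pi.smul_apply, smul_eq_mul]
      module
  left_inv p := by
    obtain ⟨z, x, f⟩ := p
    refine Prod.ext ?_ (Prod.ext rfl ?_)
    · show z - x i • w + x i • w = z
      module
    · show f + polar ⇑q w z • (Pi.single i 1 : Fin m → A)
        - (x i * q w) • (Pi.single i 1 : Fin m → A)
        - polar ⇑q w (z - x i • w) • (Pi.single i 1 : Fin m → A)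
        - (x i * q w) • (Pi.single i 1 : Fin m → A) = f
      rw [polar_sub_right, polar_smul_right, polar_self]
      simp only [smul_eq_mul]
      module
  right_inv p := by
    obtain ⟨z, x, f⟩ := p
    refine Prod.ext ?_ (Prod.ext rfl ?_)
    · show z + x i • w - x i • w = z
      module
    · show f - polar ⇑q w z • (Pi.single i 1 : Fin m → A)
        - (x i * q w) • (Pi.single i 1 : Fin m → A)
        + polar ⇑q w (z + x i • w) • (Pi.single i 1 : Fin m → A)
        - (x i * q w) • (Pi.single i 1 : Fin m → A) = f
      rw [polar_add_right, polar_smul_right, polar_self]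
      simp only [smul_eq_mul]
      module

theorem commutator_Eplus_Eplus
    {A Q : Type*} [CommRing A] [Invertible (2 : A)] [AddCommGroup Q] [Module A Q]
    {m : ℕ} (q : QuadraticForm A Q) (i k : Fin m) (w t : Q) :
    (∀ (z : Q) (x f : Fin m → A),
      ⁅Eplus q i w, Eplus q k t⁆ (z, x, f)
        = (z,
           x + (f i * polar ⇑q t w) • (Pi.single k 1 : Fin m → A)
             - (f k * polar ⇑q w t) • (Pi.single i 1 : Fin m → A),
           f)) ∧
    (i = k → ⁅Eplus q i w, Eplus q k t⁆ = 1) := by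
  have key : ∀ (z : Q) (x f : Fin m → A),
      ⁅Eplus q i w, Eplus q k t⁆ (z, x, f)
        = (z,
           x + (f i * polar ⇑q t w) • (Pi.single k 1 : Fin m → A)
             - (f k * polar ⇑q w t) • (Pi.single i 1 : Fin m → A),
           f) := by
    intro z x f
    show (Eplus q i w) ((Eplus q k t) ((Eplus q i w).symm ((Eplus q k t).symm (z, x, f)))) = _
    simp only [Eplus, LinearEquiv.coe_symm_mk, LinearEquiv.coe_mk, LinearMap.coe_mk, AddHom.coe_mk]
    refine Prod.ext ?_ (Prod.ext ?_ rfl)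
    · show z + f k • t + f i • w - f k • t - f i • w = z
      module
    · simp only [polar_add_right, polar_sub_right, polar_smul_right, polar_self,
        smul_eq_mul]
      rw [polar_comm ⇑q w t]
      module
  refine ⟨key, fun hik => ?_⟩
  subst hik
  refine LinearEquiv.ext fun p => ?_
  obtain ⟨z, x, f⟩ := p
  rw [key z x f, polar_comm ⇑q t w]
  show ((z, x + _ - _, f) : Q × (Fin m → A) × (Fin m → A)) = (z, x, f)
  refine Prod.ext rfl (Prod.ext ?_ rfl)
  module
end

section
/- For all vectors w, t ∈ Q, all indices 1 ≤ i, k ≤ m, and all scalars a, b, c, d ∈ A with ab = cd, the commutators [E_{i,a·w}, E_{k,b·t}] and [E_{i,c·w}, E_{k,d·t}] are equal as automorphisms of M. -/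
open QuadraticMap
open scoped commutatorElement

lemma commutator_Eplus_Eplus_apply
    {A Q : Type*} [CommRing A] [AddCommGroup Q] [Module A Q]
    {m : ℕ} (q : QuadraticForm A Q) (i k : Fin m) (u v : Q)
    (p : Q × (Fin m → A) × (Fin m → A)) :
    ⁅Eplus q i u, Eplus q k v⁆ p
      = (p.1,
        p.2.1 + (p.2.2 i * polar ⇑q u v) • (Pi.single k 1 : Fin m → A)
          - (p.2.2 k * polar ⇑q u v) • (Pi.single i 1 : Fin m → A),
        p.2.2) := by
  obtain ⟨z, x, f⟩ := p
  show ((Eplus q i u) ((Eplus q k v) ((Eplus q i u).symm ((Eplus q k v).symm (z, x, f))))) = _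
  simp only [Eplus, LinearEquiv.coe_mk, LinearEquiv.coe_symm_mk, Equiv.coe_fn_mk,
    Equiv.coe_fn_symm_mk]
  refine Prod.ext ?_ (Prod.ext ?_ rfl)
  · show z + f k • v + f i • u - f k • v - f i • u = z
    module
  · simp only [LinearMap.coe_mk, AddHom.coe_mk, polar_add_right, polar_sub_right, polar_smul_right, polar_self, smul_eq_mul]
    have hc : polar ⇑q u v = polar ⇑q v u := polar_comm _ _ _
    rw [hc]
    module

theorem commutator_Eplus_Eplus_scaling
    {A Q : Type*} [CommRing A] [Invertible (2 : A)] [AddCommGroup Q] [Module A Q]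
    {m : ℕ} (q : QuadraticForm A Q) (i k : Fin m) (w t : Q)
    (a b c d : A) (h : a * b = c * d) :
    ⁅Eplus q i (a • w), Eplus q k (b • t)⁆
      = ⁅Eplus q i (c • w), Eplus q k (d • t)⁆ := by
  refine LinearEquiv.toLinearMap_injective (LinearMap.ext fun p => ?_)
  show ⁅Eplus q i (a • w), Eplus q k (b • t)⁆ p = ⁅Eplus q i (c • w), Eplus q k (d • t)⁆ p
  rw [commutator_Eplus_Eplus_apply, commutator_Eplus_Eplus_apply,
    polar_smul_left, polar_smul_right, polar_smul_left, polar_smul_right]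
  simp only [smul_eq_mul]
  rw [show a * (b * polar ⇑q w t) = (a * b) * polar ⇑q w t by ring,
    show c * (d * polar ⇑q w t) = (c * d) * polar ⇑q w t by ring, h]
end

section
/- For all vectors w, v ∈ Q and all indices 1 ≤ i, k ≤ m with i ≠ k, the mixed commutator [E_{i,w}, E*_{k,v}] acts on M by [E_{i,w}, E*_{k,v}](z, x, f) = (z, x − f_k(x)·⟨w,v⟩·x_i, f + f(x_i)·⟨v,w⟩·f_k). -/
open QuadraticMap
open scoped commutatorElement

theorem commutator_Eplus_Estar
    {A Q : Type*} [CommRing A] [Invertible (2 : A)] [AddCommGroup Q] [Module A Q]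
    {m : ℕ} (q : QuadraticForm A Q) (i k : Fin m) (hik : i ≠ k) (w v : Q) :
    ∀ (z : Q) (x f : Fin m → A),
      ⁅Eplus q i w, Estar q k v⁆ (z, x, f)
        = (z,
           x - (x k * polar ⇑q w v) • (Pi.single i 1 : Fin m → A),
           f + (f i * polar ⇑q v w) • (Pi.single k 1 : Fin m → A)) := by
  intro z x f
  rw [commutatorElement_def]
  show (Eplus q i w) ((Estar q k v) ((Eplus q i w).symm ((Estar q k v).symm (z, x, f)))) = _
  simp only [Eplus, Estar, LinearEquiv.coe_mk, LinearEquiv.coe_symm_mk, LinearEquiv.symm_mk,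
    LinearMap.coe_mk, AddHom.coe_mk]
  refine Prod.ext ?_ (Prod.ext ?_ ?_) <;>
    simp only [Pi.add_apply, Pi.sub_apply, Pi.smul_apply, smul_eq_mul,
      Pi.single_eq_of_ne hik, Pi.single_eq_of_ne (Ne.symm hik), Pi.single_eq_same,
      mul_zero, mul_one, sub_zero, add_zero, zero_mul,
      polar_add_right, polar_sub_right, polar_smul_right, polar_self, polar_comm ⇑q v w] <;>
    module
end

section
/- For all vectors w, v ∈ Q, all indices 1 ≤ i, k ≤ m with i ≠ k, and all scalars a, b, c, d ∈ A with ab = cd, the mixed commutators [E_{i,a·w}, E*_{k,b·v}] and [E_{i,c·w}, E*_{k,d·v}] are equal as automorphisms of M. -/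
open QuadraticMap
open scoped commutatorElement

section Aux
variable {A Q : Type*} [CommRing A] [AddCommGroup Q] [Module A Q] {m : ℕ}

lemma mul_apply' (e₁ e₂ : (Q × (Fin m → A) × (Fin m → A)) ≃ₗ[A] (Q × (Fin m → A) × (Fin m → A)))
    (p) : (e₁ * e₂) p = e₁ (e₂ p) := rfl

lemma inv_apply' (e : (Q × (Fin m → A) × (Fin m → A)) ≃ₗ[A] (Q × (Fin m → A) × (Fin m → A)))
    (p) : e⁻¹ p = e.symm p := rfl

lemma comm_apply (q : QuadraticForm A Q) (i k : Fin m) (hik : i ≠ k) (u s : Q)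
    (p : Q × (Fin m → A) × (Fin m → A)) :
    ⁅Eplus q i u, Estar q k s⁆ p
      = (p.1,
         p.2.1 - (polar ⇑q u s * p.2.1 k) • (Pi.single i 1 : Fin m → A),
         p.2.2 + (polar ⇑q u s * p.2.2 i) • (Pi.single k 1 : Fin m → A)) := by
  obtain ⟨z, x, f⟩ := p
  have hki : k ≠ i := hik.symm
  simp only [commutatorElement_def, mul_apply', inv_apply', Eplus, Estar,
    LinearEquiv.coe_symm_mk, LinearEquiv.coe_mk, LinearMap.coe_mk, AddHom.coe_mk,
    Pi.add_apply, Pi.sub_apply, Pi.smul_apply, smul_eq_mul,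
    Pi.single_eq_same, Pi.single_eq_of_ne hik, Pi.single_eq_of_ne hki,
    mul_zero, mul_one, sub_zero, add_zero, zero_mul,
    polar_add_right, polar_sub_right, polar_add_left, polar_sub_left,
    polar_smul_left, polar_smul_right, polar_self, polar_comm ⇑q s u]
  refine Prod.ext ?_ (Prod.ext ?_ ?_)
  · show _ = z
    match_scalars <;> ring
  · match_scalars <;> ring
  · match_scalars <;> ring

end Aux

theorem commutator_Eplus_Estar_scaling
    {A Q : Type*} [CommRing A] [Invertible (2 : A)] [AddCommGroup Q] [Module A Q]
    {m : ℕ} (q : QuadraticForm A Q) (i k : Fin m) (hik : i ≠ k) (w v : Q)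
    (a b c d : A) (h : a * b = c * d) :
    ⁅Eplus q i (a • w), Estar q k (b • v)⁆
      = ⁅Eplus q i (c • w), Estar q k (d • v)⁆ := by
  refine LinearEquiv.ext fun p => ?_
  rw [comm_apply q i k hik, comm_apply q i k hik,
    polar_smul_left, polar_smul_right, polar_smul_left, polar_smul_right]
  simp only [smul_eq_mul, ← mul_assoc, h]
end

section
/- For all vectors v, c ∈ Q and all indices 1 ≤ i, k ≤ m, the commutator [E*_{i,v}, E*_{k,c}] acts on M by [E*_{i,v}, E*_{k,c}](z, x, f) = (z, x, f + f_i(x)·⟨c,v⟩·f_k − f_k(x)·⟨v,c⟩·f_i). In particular, if i = k then [E*_{i,v}, E*_{k,c}] is the identity automorphism of M. -/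
open QuadraticMap
open scoped commutatorElement

theorem commutator_Estar_Estar
    {A Q : Type*} [CommRing A] [Invertible (2 : A)] [AddCommGroup Q] [Module A Q]
    {m : ℕ} (q : QuadraticForm A Q) (i k : Fin m) (v c : Q) :
    (∀ (z : Q) (x f : Fin m → A),
      ⁅Estar q i v, Estar q k c⁆ (z, x, f)
        = (z, x,
           f + (x i * polar ⇑q c v) • (Pi.single k 1 : Fin m → A)
             - (x k * polar ⇑q v c) • (Pi.single i 1 : Fin m → A))) ∧
    (i = k → ⁅Estar q i v, Estar q k c⁆ = 1) := by
  have happly : ∀ (z : Q) (x f : Fin m → A),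
      ⁅Estar q i v, Estar q k c⁆ (z, x, f)
        = (z, x,
           f + (x i * polar ⇑q c v) • (Pi.single k 1 : Fin m → A)
             - (x k * polar ⇑q v c) • (Pi.single i 1 : Fin m → A)) := by
    intro z x f
    have hb : ⁅Estar q i v, Estar q k c⁆ (z, x, f)
        = Estar q i v (Estar q k c ((Estar q i v).symm ((Estar q k c).symm (z, x, f)))) := rfl
    rw [hb]
    have h1 : (Estar q k c).symm (z, x, f)
        = (z + x k • c, x,
           f - polar ⇑q c z • (Pi.single k 1 : Fin m → A)
             - (x k * q c) • (Pi.single k 1 : Fin m → A)) := rfl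
    rw [h1]
    have h2 : (Estar q i v).symm (z + x k • c, x,
        f - polar ⇑q c z • (Pi.single k 1 : Fin m → A)
          - (x k * q c) • (Pi.single k 1 : Fin m → A))
        = (z + x k • c + x i • v, x,
           f - polar ⇑q c z • (Pi.single k 1 : Fin m → A)
             - (x k * q c) • (Pi.single k 1 : Fin m → A)
             - polar ⇑q v (z + x k • c) • (Pi.single i 1 : Fin m → A)
             - (x i * q v) • (Pi.single i 1 : Fin m → A)) := rfl
    rw [h2]
    have h3 : Estar q k c (z + x k • c + x i • v, x,
        f - polar ⇑q c z • (Pi.single k 1 : Fin m → A)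
          - (x k * q c) • (Pi.single k 1 : Fin m → A)
          - polar ⇑q v (z + x k • c) • (Pi.single i 1 : Fin m → A)
          - (x i * q v) • (Pi.single i 1 : Fin m → A))
        = (z + x k • c + x i • v - x k • c, x,
           f - polar ⇑q c z • (Pi.single k 1 : Fin m → A)
             - (x k * q c) • (Pi.single k 1 : Fin m → A)
             - polar ⇑q v (z + x k • c) • (Pi.single i 1 : Fin m → A)
             - (x i * q v) • (Pi.single i 1 : Fin m → A)
             + polar ⇑q c (z + x k • c + x i • v) • (Pi.single k 1 : Fin m → A)
             - (x k * q c) • (Pi.single k 1 : Fin m → A)) := rfl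
    rw [h3]
    have h4 : Estar q i v (z + x k • c + x i • v - x k • c, x,
        f - polar ⇑q c z • (Pi.single k 1 : Fin m → A)
          - (x k * q c) • (Pi.single k 1 : Fin m → A)
          - polar ⇑q v (z + x k • c) • (Pi.single i 1 : Fin m → A)
          - (x i * q v) • (Pi.single i 1 : Fin m → A)
          + polar ⇑q c (z + x k • c + x i • v) • (Pi.single k 1 : Fin m → A)
          - (x k * q c) • (Pi.single k 1 : Fin m → A))
        = (z + x k • c + x i • v - x k • c - x i • v, x,
           f - polar ⇑q c z • (Pi.single k 1 : Fin m → A)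
             - (x k * q c) • (Pi.single k 1 : Fin m → A)
             - polar ⇑q v (z + x k • c) • (Pi.single i 1 : Fin m → A)
             - (x i * q v) • (Pi.single i 1 : Fin m → A)
             + polar ⇑q c (z + x k • c + x i • v) • (Pi.single k 1 : Fin m → A)
             - (x k * q c) • (Pi.single k 1 : Fin m → A)
             + polar ⇑q v (z + x k • c + x i • v - x k • c) • (Pi.single i 1 : Fin m → A)
             - (x i * q v) • (Pi.single i 1 : Fin m → A)) := rfl
    rw [h4]
    refine Prod.ext ?_ (Prod.ext rfl ?_)
    · show z + x k • c + x i • v - x k • c - x i • v = z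
      module
    · show f - polar ⇑q c z • (Pi.single k 1 : Fin m → A)
        - (x k * q c) • (Pi.single k 1 : Fin m → A)
        - polar ⇑q v (z + x k • c) • (Pi.single i 1 : Fin m → A)
        - (x i * q v) • (Pi.single i 1 : Fin m → A)
        + polar ⇑q c (z + x k • c + x i • v) • (Pi.single k 1 : Fin m → A)
        - (x k * q c) • (Pi.single k 1 : Fin m → A)
        + polar ⇑q v (z + x k • c + x i • v - x k • c) • (Pi.single i 1 : Fin m → A)
        - (x i * q v) • (Pi.single i 1 : Fin m → A)
        = f + (x i * polar ⇑q c v) • (Pi.single k 1 : Fin m → A)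
            - (x k * polar ⇑q v c) • (Pi.single i 1 : Fin m → A)
      simp only [polar_add_right, polar_sub_right, polar_smul_right, polar_self]
      simp only [smul_eq_mul]
      match_scalars <;> ring
  refine ⟨happly, fun hik => ?_⟩
  subst hik
  apply LinearEquiv.toLinearMap_injective
  apply LinearMap.ext
  rintro ⟨z, x, f⟩
  have := happly z x f
  simp only [LinearEquiv.coe_coe] at *
  rw [this]
  have hpol : polar ⇑q c v = polar ⇑q v c := polar_comm _ _ _
  show _ = (z, x, f)
  rw [hpol]
  refine Prod.ext rfl (Prod.ext rfl ?_)
  module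
end

section
/- For all vectors v, u ∈ Q, all indices 1 ≤ i, k ≤ m, and all scalars a, b, c, d ∈ A with ab = cd, the commutators [E*_{i,a·v}, E*_{k,b·u}] and [E*_{i,c·v}, E*_{k,d·u}] are equal as automorphisms of M. -/
open QuadraticMap
open scoped commutatorElement

lemma Estar_comm_apply {A Q : Type*} [CommRing A] [AddCommGroup Q] [Module A Q]
    {m : ℕ} (q : QuadraticForm A Q) (i k : Fin m) (w w' : Q)
    (p : Q × (Fin m → A) × (Fin m → A)) :
    ⁅Estar q i w, Estar q k w'⁆ p
      = (p.1, p.2.1, p.2.2 - (p.2.1 k * polar ⇑q w w') • (Pi.single i 1 : Fin m → A)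
          + (p.2.1 i * polar ⇑q w w') • (Pi.single k 1 : Fin m → A)) := by
  obtain ⟨z, x, f⟩ := p
  show (Estar q i w) ((Estar q k w') ((Estar q i w).symm ((Estar q k w').symm (z,x,f)))) = _
  simp only [Estar, LinearEquiv.coe_mk, LinearEquiv.coe_symm_mk, Equiv.coe_fn_mk, LinearMap.coe_mk, AddHom.coe_mk]
  refine Prod.ext ?_ (Prod.ext rfl ?_)
  · show z + x k • w' + x i • w - x k • w' - x i • w = z
    module
  · simp only [polar_sub_right, polar_add_right, polar_smul_right, polar_self, smul_eq_mul,
      polar_comm ⇑q w' w]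
    module

theorem commutator_Estar_Estar_scaling
    {A Q : Type*} [CommRing A] [Invertible (2 : A)] [AddCommGroup Q] [Module A Q]
    {m : ℕ} (q : QuadraticForm A Q) (i k : Fin m) (v u : Q)
    (a b c d : A) (h : a * b = c * d) :
    ⁅Estar q i (a • v), Estar q k (b • u)⁆
      = ⁅Estar q i (c • v), Estar q k (d • u)⁆ := by
  have hp : polar ⇑q (a • v) (b • u) = polar ⇑q (c • v) (d • u) := by
    simp only [polar_smul_left, polar_smul_right, smul_eq_mul, ← mul_assoc, mul_comm b a, mul_comm d c, h]
  refine LinearEquiv.ext fun p => ?_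
  rw [Estar_comm_apply, Estar_comm_apply, hp]
end

section
/- Let v, w, t ∈ Q and let 1 ≤ i, k, p ≤ m with i ≠ k and k ≠ p. For all scalars a, b, c, a', b', c' ∈ A satisfying abc = a'b'c' and a²bc = a'²b'c', the triple commutators [E*_{i,a·v}, [E_{k,b·w}, E_{p,c·t}]] and [E*_{i,a'·v}, [E_{k,b'·w}, E_{p,c'·t}]] are equal as automorphisms of M. -/
open QuadraticMap
open scoped commutatorElement

section
variable {A Q : Type*} [CommRing A] [AddCommGroup Q] [Module A Q] {m : ℕ}
  (q : QuadraticForm A Q) (i : Fin m) (w : Q) (z : Q) (x f : Fin m → A)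

lemma Eplus_apply : Eplus q i w (z, x, f) = (z - f i • w,
    x + polar ⇑q w z • (Pi.single i 1 : Fin m → A)
      - (f i * q w) • (Pi.single i 1 : Fin m → A), f) := rfl

lemma Eplus_inv_apply : (Eplus q i w)⁻¹ (z, x, f) = (z + f i • w,
    x - polar ⇑q w z • (Pi.single i 1 : Fin m → A)
      - (f i * q w) • (Pi.single i 1 : Fin m → A), f) := rfl

lemma Estar_apply : Estar q i w (z, x, f) = (z - x i • w, x,
    f + polar ⇑q w z • (Pi.single i 1 : Fin m → A)
      - (x i * q w) • (Pi.single i 1 : Fin m → A)) := rfl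

lemma Estar_inv_apply : (Estar q i w)⁻¹ (z, x, f) = (z + x i • w, x,
    f - polar ⇑q w z • (Pi.single i 1 : Fin m → A)
      - (x i * q w) • (Pi.single i 1 : Fin m → A)) := rfl

end
lemma LE_mul_apply {A M : Type*} [CommRing A] [AddCommGroup M] [Module A M]
    (g h : M ≃ₗ[A] M) (x : M) : (g * h) x = g (h x) := rfl

set_option maxHeartbeats 4000000 in
theorem triple_commutator_Estar_EplusEplus_scaling
    {A Q : Type*} [CommRing A] [Invertible (2 : A)] [AddCommGroup Q] [Module A Q]
    {m : ℕ} (q : QuadraticForm A Q) (i k p : Fin m)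
    (hik : i ≠ k) (hkp : k ≠ p) (v w t : Q)
    (a b c a' b' c' : A) (h1 : a * b * c = a' * b' * c')
    (h2 : a ^ 2 * b * c = a' ^ 2 * b' * c') :
    ⁅Estar q i (a • v), ⁅Eplus q k (b • w), Eplus q p (c • t)⁆⁆
      = ⁅Estar q i (a' • v), ⁅Eplus q k (b' • w), Eplus q p (c' • t)⁆⁆ := by
  have hki : k ≠ i := hik.symm
  have hpk : p ≠ k := hkp.symm
  refine LinearEquiv.ext fun zxf => ?_
  obtain ⟨z, x, f⟩ := zxf
  simp only [commutatorElement_def, mul_inv_rev, inv_inv, LE_mul_apply,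
    Eplus_apply, Estar_apply, Eplus_inv_apply, Estar_inv_apply,
    Pi.add_apply, Pi.sub_apply, Pi.smul_apply, smul_eq_mul,
    Pi.single_eq_same, Pi.single_eq_of_ne hik, Pi.single_eq_of_ne hki,
    Pi.single_eq_of_ne hkp, Pi.single_eq_of_ne hpk,
    polar_add_right, polar_sub_right, polar_smul_right, polar_smul_left, polar_self,
    QuadraticMap.map_smul, Prod.mk.injEq]
  refine ⟨?_, ?_, ?_⟩ <;> match_scalars <;>
    first
    | ring1
    | linear_combination (norm := ring1)
        (-(f k * QuadraticMap.polar (⇑q) t w * (Pi.single p 1 : Fin m → A) i)) * h1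
    | linear_combination (norm := ring1)
        (QuadraticMap.polar (⇑q) w t * x i * (Pi.single i 1 : Fin m → A) p * q v) * h2
        + (QuadraticMap.polar (⇑q) w t * QuadraticMap.polar (⇑q) v z
            * (Pi.single i 1 : Fin m → A) p) * h1
        - (f k * QuadraticMap.polar (⇑q) w t * QuadraticMap.polar (⇑q) t w
            * (Pi.single p 1 : Fin m → A) i * (Pi.single i 1 : Fin m → A) p * q v
            * (a * b * c + a' * b' * c')) * h1
    | linear_combination (norm := ring1)
        (-(f k * QuadraticMap.polar (⇑q) t w * (Pi.single p 1 : Fin m → A) i * q v)) * h2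
end

section
/- Let w, v, t, c ∈ Q and let 1 ≤ i, k, r, p ≤ m with i ≠ k and r ≠ p. Then the four-fold commutator [[E_{i,w}, E*_{k,v}], [E_{r,t}, E*_{p,c}]] acts on M as follows: (1) if k = r and i ≠ p, it sends (z,x,f) to (z, x + f_p(x)·⟨t,c⟩·⟨w,v⟩·x_i, f − f(x_i)·⟨v,w⟩·⟨c,t⟩·f_p); (2) if i = p and k ≠ r, it sends (z,x,f) to (z, x − f_k(x)·⟨w,v⟩·⟨t,c⟩·x_r, f + f(x_r)·⟨c,t⟩·⟨v,w⟩·f_k); (3) if k ≠ r and i ≠ p, it is the identity automorphism of M. -/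
open QuadraticMap
open scoped commutatorElement

section Aux

variable {A Q : Type*} [CommRing A] [AddCommGroup Q] [Module A Q] {m : ℕ}

/-- auxiliary hyperbolic elementary transformation:
`(z,x,f) ↦ (z, x + a·x_k • e_i, f − a·f_i • e_k)` for `i ≠ k`. -/
noncomputable def Hyp (Q : Type*) [AddCommGroup Q] [Module A Q]
    (i k : Fin m) (hik : i ≠ k) (a : A) :
    (Q × (Fin m → A) × (Fin m → A)) ≃ₗ[A] (Q × (Fin m → A) × (Fin m → A)) where
  toFun p := (p.1, p.2.1 + (a * p.2.1 k) • (Pi.single i 1 : Fin m → A),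
    p.2.2 - (a * p.2.2 i) • (Pi.single k 1 : Fin m → A))
  invFun p := (p.1, p.2.1 - (a * p.2.1 k) • (Pi.single i 1 : Fin m → A),
    p.2.2 + (a * p.2.2 i) • (Pi.single k 1 : Fin m → A))
  map_add' p p' := by
    obtain ⟨z, x, f⟩ := p; obtain ⟨z', x', f'⟩ := p'
    refine Prod.ext rfl (Prod.ext ?_ ?_)
    · show x + x' + (a * (x k + x' k)) • _ = (x + (a * x k) • _) + (x' + (a * x' k) • _)
      module
    · show f + f' - (a * (f i + f' i)) • _ = (f - (a * f i) • _) + (f' - (a * f' i) • _)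
      module
  map_smul' b p := by
    obtain ⟨z, x, f⟩ := p
    refine Prod.ext rfl (Prod.ext ?_ ?_)
    · show b • x + (a * (b • x) k) • _ = b • (x + (a * x k) • _)
      simp only [Pi.smul_apply, smul_eq_mul]; module
    · show b • f - (a * (b • f) i) • _ = b • (f - (a * f i) • _)
      simp only [Pi.smul_apply, smul_eq_mul]; module
  left_inv p := by
    obtain ⟨z, x, f⟩ := p
    refine Prod.ext rfl (Prod.ext ?_ ?_)
    · show x + (a * x k) • _ - (a * (x + (a * x k) • (Pi.single i 1 : Fin m → A)) k) • _ = x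
      simp only [Pi.add_apply, Pi.smul_apply, Pi.single_eq_of_ne (Ne.symm hik), smul_eq_mul,
        mul_zero, add_zero]
      module
    · show f - (a * f i) • _ + (a * (f - (a * f i) • (Pi.single k 1 : Fin m → A)) i) • _ = f
      simp only [Pi.sub_apply, Pi.smul_apply, Pi.single_eq_of_ne hik, smul_eq_mul,
        mul_zero, sub_zero]
      module
  right_inv p := by
    obtain ⟨z, x, f⟩ := p
    refine Prod.ext rfl (Prod.ext ?_ ?_)
    · show x - (a * x k) • _ + (a * (x - (a * x k) • (Pi.single i 1 : Fin m → A)) k) • _ = x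
      simp only [Pi.sub_apply, Pi.smul_apply, Pi.single_eq_of_ne (Ne.symm hik), smul_eq_mul,
        mul_zero, sub_zero]
      module
    · show f + (a * f i) • _ - (a * (f + (a * f i) • (Pi.single k 1 : Fin m → A)) i) • _ = f
      simp only [Pi.add_apply, Pi.smul_apply, Pi.single_eq_of_ne hik, smul_eq_mul,
        mul_zero, add_zero]
      module

variable {M : Type*} [AddCommGroup M] [Module A M]

lemma LE_mul_apply_s16 (e₁ e₂ : M ≃ₗ[A] M) (x : M) : (e₁ * e₂) x = e₁ (e₂ x) := rfl

lemma LE_one_apply (x : M) : (1 : M ≃ₗ[A] M) x = x := rfl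

lemma Hyp_inv (i k : Fin m) (hik : i ≠ k) (a : A) :
    (Hyp Q i k hik a)⁻¹ = Hyp Q i k hik (-a) := by
  refine inv_eq_of_mul_eq_one_right ?_
  refine LinearEquiv.ext fun p => ?_
  obtain ⟨z, x, f⟩ := p
  rw [LE_mul_apply_s16, LE_one_apply]
  simp only [Hyp, LinearEquiv.coe_mk, LinearMap.coe_mk, AddHom.coe_mk]
  refine Prod.ext rfl (Prod.ext ?_ ?_)
  · show x + (-a * x k) • _ + (a * (x + (-a * x k) • (Pi.single i 1 : Fin m → A)) k) • _ = x
    simp only [Pi.add_apply, Pi.smul_apply, Pi.single_eq_of_ne (Ne.symm hik), smul_eq_mul,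
      mul_zero, add_zero]
    module
  · show f - (-a * f i) • _ - (a * (f - (-a * f i) • (Pi.single k 1 : Fin m → A)) i) • _ = f
    simp only [Pi.sub_apply, Pi.smul_apply, Pi.single_eq_of_ne hik, smul_eq_mul,
      mul_zero, sub_zero]
    module

open QuadraticMap in
lemma bracket_Eplus_Estar (q : QuadraticForm A Q) (i k : Fin m) (hik : i ≠ k) (w v : Q) :
    ⁅Eplus q i w, Estar q k v⁆ = Hyp Q i k hik (-(polar ⇑q w v)) := by
  rw [commutatorElement_def, mul_inv_eq_iff_eq_mul, mul_inv_eq_iff_eq_mul]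
  refine LinearEquiv.ext fun p => ?_
  obtain ⟨z, x, f⟩ := p
  simp only [LE_mul_apply_s16]
  simp only [Eplus, Estar, Hyp, LinearEquiv.coe_mk, LinearMap.coe_mk, AddHom.coe_mk]
  have eik : (Pi.single i 1 : Fin m → A) k = 0 := Pi.single_eq_of_ne (Ne.symm hik) 1
  have eki : (Pi.single k 1 : Fin m → A) i = 0 := Pi.single_eq_of_ne hik 1
  have eii : (Pi.single i 1 : Fin m → A) i = 1 := Pi.single_eq_same i 1
  have ekk : (Pi.single k 1 : Fin m → A) k = 1 := Pi.single_eq_same k 1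
  have h2 : polar ⇑q v v = 2 * q v := by
    rw [polar_self, two_smul, two_mul]
  have hc : polar ⇑q v w = polar ⇑q w v := polar_comm ⇑q v w
  simp only [Pi.add_apply, Pi.sub_apply, Pi.smul_apply, eik, eki, eii, ekk, smul_eq_mul,
    mul_zero, mul_one, add_zero, sub_zero, polar_sub_right, polar_add_right, polar_smul_right,
    smul_eq_mul, h2, hc]
  refine Prod.ext ?_ (Prod.ext ?_ ?_) <;> module

lemma Hyp_bracket_eq (i r p : Fin m) (hir : i ≠ r) (hrp : r ≠ p) (hip : i ≠ p) (a b : A) :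
    ⁅Hyp Q i r hir a, Hyp Q r p hrp b⁆ = Hyp Q i p hip (a * b) := by
  rw [commutatorElement_def, mul_inv_eq_iff_eq_mul, mul_inv_eq_iff_eq_mul]
  refine LinearEquiv.ext fun pt => ?_
  obtain ⟨z, x, f⟩ := pt
  simp only [LE_mul_apply_s16]
  simp only [Hyp, LinearEquiv.coe_mk, LinearMap.coe_mk, AddHom.coe_mk]
  have e1 : (Pi.single i 1 : Fin m → A) r = 0 := Pi.single_eq_of_ne (Ne.symm hir) 1
  have e2 : (Pi.single r 1 : Fin m → A) i = 0 := Pi.single_eq_of_ne hir 1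
  have e3 : (Pi.single r 1 : Fin m → A) p = 0 := Pi.single_eq_of_ne (Ne.symm hrp) 1
  have e4 : (Pi.single p 1 : Fin m → A) r = 0 := Pi.single_eq_of_ne hrp 1
  have e5 : (Pi.single i 1 : Fin m → A) p = 0 := Pi.single_eq_of_ne (Ne.symm hip) 1
  have e6 : (Pi.single p 1 : Fin m → A) i = 0 := Pi.single_eq_of_ne hip 1
  simp only [Pi.add_apply, Pi.sub_apply, Pi.smul_apply, e1, e2, e3, e4, e5, e6,
    Pi.single_eq_same, smul_eq_mul, mul_zero, mul_one, add_zero, sub_zero]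
  refine Prod.ext rfl (Prod.ext ?_ ?_) <;> module

lemma Hyp_bracket_one (i k r p : Fin m) (hik : i ≠ k) (hrp : r ≠ p)
    (hkr : k ≠ r) (hip : i ≠ p) (a b : A) :
    ⁅Hyp Q i k hik a, Hyp Q r p hrp b⁆ = 1 := by
  rw [commutatorElement_def, mul_inv_eq_iff_eq_mul, mul_inv_eq_iff_eq_mul, one_mul]
  refine LinearEquiv.ext fun pt => ?_
  obtain ⟨z, x, f⟩ := pt
  simp only [LE_mul_apply_s16]
  simp only [Hyp, LinearEquiv.coe_mk, LinearMap.coe_mk, AddHom.coe_mk]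
  have e1 : (Pi.single r 1 : Fin m → A) k = 0 := Pi.single_eq_of_ne hkr 1
  have e2 : (Pi.single k 1 : Fin m → A) r = 0 := Pi.single_eq_of_ne (Ne.symm hkr) 1
  have e3 : (Pi.single i 1 : Fin m → A) p = 0 := Pi.single_eq_of_ne (Ne.symm hip) 1
  have e4 : (Pi.single p 1 : Fin m → A) i = 0 := Pi.single_eq_of_ne hip 1
  simp only [Pi.add_apply, Pi.sub_apply, Pi.smul_apply, e1, e2, e3, e4,
    smul_eq_mul, mul_zero, mul_one, add_zero, sub_zero]
  refine Prod.ext rfl (Prod.ext ?_ ?_) <;> module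

end Aux

theorem fourfold_commutator_EplusEstar_EplusEstar
    {A Q : Type*} [CommRing A] [Invertible (2 : A)] [AddCommGroup Q] [Module A Q]
    {m : ℕ} (q : QuadraticForm A Q) (i k r p : Fin m)
    (hik : i ≠ k) (hrp : r ≠ p) (w v t c : Q) :
    (k = r → i ≠ p → ∀ (z : Q) (x f : Fin m → A),
      ⁅⁅Eplus q i w, Estar q k v⁆, ⁅Eplus q r t, Estar q p c⁆⁆ (z, x, f)
        = (z,
           x + (x p * polar ⇑q t c * polar ⇑q w v) • (Pi.single i 1 : Fin m → A),
           f - (f i * polar ⇑q v w * polar ⇑q c t) • (Pi.single p 1 : Fin m → A))) ∧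
    (i = p → k ≠ r → ∀ (z : Q) (x f : Fin m → A),
      ⁅⁅Eplus q i w, Estar q k v⁆, ⁅Eplus q r t, Estar q p c⁆⁆ (z, x, f)
        = (z,
           x - (x k * polar ⇑q w v * polar ⇑q t c) • (Pi.single r 1 : Fin m → A),
           f + (f r * polar ⇑q c t * polar ⇑q v w) • (Pi.single k 1 : Fin m → A))) ∧
    (k ≠ r → i ≠ p → ⁅⁅Eplus q i w, Estar q k v⁆, ⁅Eplus q r t, Estar q p c⁆⁆ = 1) := by
  have hc : ∀ u u' : Q, polar ⇑q u u' = polar ⇑q u' u := fun u u' => polar_comm ⇑q u u'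
  refine ⟨?_, ?_, ?_⟩
  · intro hkr hip z x f
    subst hkr
    rw [bracket_Eplus_Estar q i k hik w v, bracket_Eplus_Estar q k p hrp t c,
      Hyp_bracket_eq i k p hik hrp hip]
    simp only [Hyp, LinearEquiv.coe_mk, LinearMap.coe_mk, AddHom.coe_mk]
    refine Prod.ext rfl (Prod.ext ?_ ?_)
    · show x + (-polar ⇑q w v * -polar ⇑q t c * x p) • _ = _
      module
    · show f - (-polar ⇑q w v * -polar ⇑q t c * f i) • _ = _
      rw [hc v w, hc c t]
      module
  · intro hip hkr z x f
    subst hip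
    have hrk : r ≠ k := fun h => hkr h.symm
    rw [bracket_Eplus_Estar q i k hik w v, bracket_Eplus_Estar q r i hrp t c,
      show ⁅Hyp Q i k hik (-polar ⇑q w v), Hyp Q r i hrp (-polar ⇑q t c)⁆
          = ⁅Hyp Q r i hrp (-polar ⇑q t c), Hyp Q i k hik (-polar ⇑q w v)⁆⁻¹ from
        (commutatorElement_inv _ _).symm,
      Hyp_bracket_eq r i k hrp hik hrk, Hyp_inv]
    simp only [Hyp, LinearEquiv.coe_mk, LinearMap.coe_mk, AddHom.coe_mk]
    refine Prod.ext rfl (Prod.ext ?_ ?_)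
    · show x + (-(-polar ⇑q t c * -polar ⇑q w v) * x k) • _ = _
      module
    · show f - (-(-polar ⇑q t c * -polar ⇑q w v) * f r) • _ = _
      rw [hc v w, hc c t]
      module
  · intro hkr hip
    rw [bracket_Eplus_Estar q i k hik w v, bracket_Eplus_Estar q r p hrp t c,
      Hyp_bracket_one i k r p hik hrp hkr hip]
end
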